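/- For every positive integer n and k ≥ 1, the number of subgroups of index n in ℤ^k equals Σ_{d₁d₂⋯d_k = n} d₁^0 d₂^1 ⋯ d_k^{k-1}, the sum being over ordered k-tuples of positive integers with product n. -/

import Mathlib

open AddSubgroup

section Helpers

lemma natCard_sigma {ι : Type*} [Fintype ι] (f : ι → Type*) [∀ i, Finite (f i)] :
    Nat.card (Σ i, f i) = ∑ i, Nat.card (f i) := by
  letI : ∀ i, Fintype (f i) := fun i => Fintype.ofFinite _
  simp [Nat.card_eq_fintype_card, Fintype.card_sigma]

end Helpers

section Phi

variable {B : Type*} [AddCommGroup B]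

/-- The subgroup of `ℤ × B` built from `c`, a coset representative `b`, and `H'`. -/
def Phi (c : ℕ) (b : B) (H' : AddSubgroup B) : AddSubgroup (ℤ × B) :=
  AddSubgroup.zmultiples ((c : ℤ), b) ⊔ H'.map (AddMonoidHom.inr ℤ B)

lemma mem_Phi {c : ℕ} {b : B} {H' : AddSubgroup B} {x : ℤ} {y : B} :
    (x, y) ∈ Phi c b H' ↔ ∃ t : ℤ, x = t * c ∧ y - t • b ∈ H' := by
  constructor
  · intro h
    rw [Phi, AddSubgroup.mem_sup] at h
    obtain ⟨a, ha, z, hz, hsum⟩ := h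
    obtain ⟨t, rfl⟩ := AddSubgroup.mem_zmultiples_iff.mp ha
    obtain ⟨h', hh', rfl⟩ := AddSubgroup.mem_map.mp hz
    have h1 := congrArg Prod.fst hsum
    have h2 := congrArg Prod.snd hsum
    simp only [Prod.smul_fst, Prod.smul_snd, Prod.fst_add, Prod.snd_add,
      AddMonoidHom.inr_apply, smul_eq_mul, add_zero] at h1 h2
    refine ⟨t, by simpa using h1.symm, ?_⟩
    have : y - t • b = h' := by
      rw [← h2]; simp
    rwa [this]
  · rintro ⟨t, rfl, hy⟩
    rw [Phi, AddSubgroup.mem_sup]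
    refine ⟨t • ((c : ℤ), b), AddSubgroup.mem_zmultiples_iff.mpr ⟨t, rfl⟩,
      (0, y - t • b), AddSubgroup.mem_map.mpr ⟨y - t • b, hy, rfl⟩, ?_⟩
    ext
    · simp [smul_eq_mul]
    · simp

lemma Phi_congr {c : ℕ} {b b' : B} {H' : AddSubgroup B} (h : b - b' ∈ H') :
    Phi c b H' = Phi c b' H' := by
  have key : ∀ (u v : B), u - v ∈ H' → ∀ x y, ((x, y) ∈ Phi c u H') → ((x, y) ∈ Phi c v H') := by
    intro u v huv x y hx
    rw [mem_Phi] at hx ⊢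
    obtain ⟨t, rfl, hy⟩ := hx
    refine ⟨t, rfl, ?_⟩
    have : y - t • v = (y - t • u) + t • (u - v) := by
      rw [smul_sub]; abel
    rw [this]
    exact add_mem hy (AddSubgroup.zsmul_mem _ huv t)
  ext ⟨x, y⟩
  exact ⟨key b b' h x y, key b' b (by simpa using AddSubgroup.neg_mem _ h) x y⟩

lemma quot_Phi_equiv (c : ℕ) (hc : 0 < c) (b : B) (H' : AddSubgroup B) :
    Nonempty ((ℤ × B) ⧸ Phi c b H' ≃ ZMod c × B ⧸ H') := by
  haveI : NeZero c := ⟨hc.ne'⟩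
  have hc' : (c : ℤ) ≠ 0 := by exact_mod_cast hc.ne'
  set f : ℤ × B → ZMod c × (B ⧸ H') :=
    fun p => ((p.1 : ZMod c), QuotientAddGroup.mk (p.2 - (p.1 / (c : ℤ)) • b)) with hf
  have hcompat : ∀ p q : ℤ × B, -p + q ∈ Phi c b H' → f p = f q := by
    rintro ⟨x₁, y₁⟩ ⟨x₂, y₂⟩ hmem
    have heq : (-(x₁, y₁) + (x₂, y₂) : ℤ × B) = (x₂ - x₁, y₂ - y₁) := by
      ext <;> simp <;> abel
    rw [heq, mem_Phi] at hmem
    obtain ⟨t, hx, hy⟩ := hmem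
    have hx2 : x₂ = x₁ + t * c := by linarith
    have hdiv : x₂ / (c : ℤ) = x₁ / (c : ℤ) + t := by
      rw [hx2, Int.add_mul_ediv_right _ _ hc']
    refine Prod.ext ?_ ?_
    · show (x₁ : ZMod c) = (x₂ : ZMod c)
      exact (ZMod.intCast_eq_intCast_iff _ _ _).mpr
        (Int.modEq_iff_dvd.mpr ⟨t, by rw [hx]; ring⟩)
    · show QuotientAddGroup.mk (y₁ - (x₁ / (c : ℤ)) • b)
        = QuotientAddGroup.mk (y₂ - (x₂ / (c : ℤ)) • b)
      rw [QuotientAddGroup.eq]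
      have : -(y₁ - (x₁ / (c : ℤ)) • b) + (y₂ - (x₂ / (c : ℤ)) • b)
          = (y₂ - y₁) - t • b := by
        rw [hdiv, add_smul]; abel
      rw [this]; exact hy
  set F : (ℤ × B) ⧸ Phi c b H' → ZMod c × (B ⧸ H') :=
    fun q => Quotient.liftOn' q f
      (fun p q h => hcompat p q ((QuotientAddGroup.leftRel_apply).mp h)) with hF
  refine ⟨Equiv.ofBijective F ⟨?_, ?_⟩⟩
  · intro q₁ q₂
    refine Quotient.inductionOn₂' q₁ q₂ ?_
    rintro ⟨x₁, y₁⟩ ⟨x₂, y₂⟩ h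
    have h1 : (x₁ : ZMod c) = (x₂ : ZMod c) := congrArg Prod.fst h
    have h2 : QuotientAddGroup.mk (y₁ - (x₁ / (c : ℤ)) • b)
        = (QuotientAddGroup.mk (y₂ - (x₂ / (c : ℤ)) • b) : B ⧸ H') := congrArg Prod.snd h
    obtain ⟨t, ht⟩ := Int.ModEq.dvd ((ZMod.intCast_eq_intCast_iff _ _ _).mp h1)
    apply Quotient.sound'
    rw [QuotientAddGroup.leftRel_apply]
    have heq : (-(x₁, y₁) + (x₂, y₂) : ℤ × B) = (x₂ - x₁, y₂ - y₁) := by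
      ext <;> simp <;> abel
    rw [heq, mem_Phi]
    refine ⟨t, by rw [ht]; ring, ?_⟩
    have hx2 : x₂ = x₁ + t * c := by rw [show t * (c : ℤ) = c * t by ring, ← ht]; ring
    have hdiv : x₂ / (c : ℤ) = x₁ / (c : ℤ) + t := by
      rw [hx2, Int.add_mul_ediv_right _ _ hc']
    rw [QuotientAddGroup.eq] at h2
    have : (y₂ - y₁) - t • b
        = -(y₁ - (x₁ / (c : ℤ)) • b) + (y₂ - (x₂ / (c : ℤ)) • b) := by
      rw [hdiv, add_smul]; abel
    rw [this]; exact h2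
  · rintro ⟨r, β⟩
    refine ⟨QuotientAddGroup.mk ((r.val : ℤ), β.out), ?_⟩
    have hdiv0 : ((r.val : ℕ) : ℤ) / (c : ℤ) = 0 :=
      Int.ediv_eq_zero_of_lt (by positivity) (by exact_mod_cast ZMod.val_lt r)
    show f ((r.val : ℤ), β.out) = (r, β)
    refine Prod.ext ?_ ?_
    · show (((r.val : ℕ) : ℤ) : ZMod c) = r
      push_cast
      exact ZMod.natCast_rightInverse r
    · show QuotientAddGroup.mk (β.out - (((r.val : ℕ) : ℤ) / (c : ℤ)) • b) = β
      rw [hdiv0, zero_smul, sub_zero]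
      exact QuotientAddGroup.out_eq' β

lemma index_Phi (c : ℕ) (hc : 0 < c) (b : B) (H' : AddSubgroup B) :
    (Phi c b H').index = c * H'.index := by
  obtain ⟨e⟩ := quot_Phi_equiv c hc b H'
  rw [AddSubgroup.index_eq_card, Nat.card_congr e, Nat.card_prod, Nat.card_zmod,
    AddSubgroup.index_eq_card]

lemma map_fst_Phi (c : ℕ) (b : B) (H' : AddSubgroup B) :
    (Phi c b H').map (AddMonoidHom.fst ℤ B) = AddSubgroup.zmultiples (c : ℤ) := by
  ext x
  simp only [AddSubgroup.mem_map, AddSubgroup.mem_zmultiples_iff]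
  constructor
  · rintro ⟨⟨x', y'⟩, hmem, rfl⟩
    obtain ⟨t, rfl, -⟩ := mem_Phi.mp hmem
    exact ⟨t, by simp [smul_eq_mul]⟩
  · rintro ⟨t, rfl⟩
    exact ⟨(t * c, t • b), mem_Phi.mpr ⟨t, by simp, by simp [zero_mem]⟩, by simp [smul_eq_mul]⟩

lemma comap_inr_Phi (c : ℕ) (hc : 0 < c) (b : B) (H' : AddSubgroup B) :
    (Phi c b H').comap (AddMonoidHom.inr ℤ B) = H' := by
  ext y
  simp only [AddSubgroup.mem_comap]
  show ((0 : ℤ), y) ∈ Phi c b H' ↔ y ∈ H'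
  rw [mem_Phi]
  constructor
  · rintro ⟨t, ht, hy⟩
    have hc' : (c : ℤ) ≠ 0 := by exact_mod_cast hc.ne'
    have ht0 : t = 0 := by
      rcases mul_eq_zero.mp ht.symm with h | h
      · exact h
      · exact absurd h hc'
    simpa [ht0] using hy
  · intro hy
    exact ⟨0, by simp, by simpa⟩

lemma sub_mem_of_Phi_eq {c : ℕ} (hc : 0 < c) {b b' : B} {H' : AddSubgroup B}
    (h : Phi c b H' = Phi c b' H') : b - b' ∈ H' := by
  have hb : ((c : ℤ), b) ∈ Phi c b H' := mem_Phi.mpr ⟨1, by simp, by simp [zero_mem]⟩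
  rw [h, mem_Phi] at hb
  obtain ⟨t, htc, hb⟩ := hb
  have hc' : (c : ℤ) ≠ 0 := by exact_mod_cast hc.ne'
  have ht1 : t = 1 := by
    have h2 : (t - 1) * (c : ℤ) = 0 := by
      rw [sub_mul, one_mul, ← htc]; ring
    rcases mul_eq_zero.mp h2 with h1 | h1
    · linarith
    · exact absurd h1 hc'
  simpa [ht1] using hb

lemma zmultiples_natAbs (a : ℤ) :
    AddSubgroup.zmultiples ((a.natAbs : ℤ)) = AddSubgroup.zmultiples a := by
  ext x
  simp [Int.mem_zmultiples_iff, Int.natAbs_dvd]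

lemma exists_Phi (H : AddSubgroup (ℤ × B)) (hH : H.index ≠ 0) :
    ∃ (c : ℕ) (b : B), 0 < c ∧ H = Phi c b (H.comap (AddMonoidHom.inr ℤ B)) := by
  obtain ⟨a, ha⟩ := Int.subgroup_cyclic (H.map (AddMonoidHom.fst ℤ B))
  have hM : H.map (AddMonoidHom.fst ℤ B) = AddSubgroup.zmultiples ((a.natAbs : ℤ)) := by
    rw [ha, zmultiples_natAbs, ← AddSubgroup.zmultiples_eq_closure]
  set c := a.natAbs with hcdef
  have hc : 0 < c := by
    rcases Nat.eq_zero_or_pos c with h0 | h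
    · exfalso
      have hbot : H.map (AddMonoidHom.fst ℤ B) = ⊥ := by
        rw [hM, h0]
        ext x
        simp [Int.mem_zmultiples_iff]
      have hle : H ≤ AddSubgroup.comap (AddMonoidHom.fst ℤ B) ⊥ := by
        intro p hp
        rw [AddSubgroup.mem_comap]
        rw [← hbot]
        exact AddSubgroup.mem_map_of_mem _ hp
      have hsurj : Function.Surjective (AddMonoidHom.fst ℤ B) := fun x => ⟨(x, 0), rfl⟩
      have hidx : (AddSubgroup.comap (AddMonoidHom.fst ℤ B) (⊥ : AddSubgroup ℤ)).index = 0 := by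
        rw [AddSubgroup.index_comap_of_surjective _ hsurj, AddSubgroup.index_bot]
        exact Nat.card_eq_zero_of_infinite
      have := AddSubgroup.index_dvd_of_le hle
      rw [hidx] at this
      exact hH (Nat.eq_zero_of_zero_dvd this)
    · exact h
  have hcm : ((c : ℤ)) ∈ H.map (AddMonoidHom.fst ℤ B) := by
    rw [hM]
    exact AddSubgroup.mem_zmultiples _
  obtain ⟨⟨x, b⟩, hpH, hpx⟩ := AddSubgroup.mem_map.mp hcm
  have hpx' : x = (c : ℤ) := hpx
  subst hpx'
  refine ⟨c, b, hc, ?_⟩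
  ext ⟨x, y⟩
  rw [mem_Phi]
  constructor
  · intro hxy
    have hx : x ∈ H.map (AddMonoidHom.fst ℤ B) := AddSubgroup.mem_map_of_mem _ hxy
    rw [hM] at hx
    obtain ⟨t, rfl⟩ := AddSubgroup.mem_zmultiples_iff.mp hx
    refine ⟨t, by simp [smul_eq_mul], ?_⟩
    rw [AddSubgroup.mem_comap]
    have hsub : (t • ((c : ℤ)), y) - t • (((c : ℤ)), b) ∈ H :=
      AddSubgroup.sub_mem _ hxy (AddSubgroup.zsmul_mem _ hpH t)
    have : (t • ((c : ℤ)), y) - t • (((c : ℤ)), b) = ((0 : ℤ), y - t • b) := by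
      ext <;> simp
    rwa [this] at hsub
  · rintro ⟨t, rfl, hy⟩
    rw [AddSubgroup.mem_comap] at hy
    have : ((t * (c : ℤ)), y) = t • (((c : ℤ)), b) + ((0 : ℤ), y - t • b) := by
      ext <;> simp [smul_eq_mul]
    rw [this]
    exact AddSubgroup.add_mem _ (AddSubgroup.zsmul_mem _ hpH t) hy

/-- The counting step. -/
lemma step (n : ℕ) (hn : 0 < n)
    (hfin : ∀ m : ℕ, m ≠ 0 → Finite {H' : AddSubgroup B // H'.index = m}) :
    Nat.card {H : AddSubgroup (ℤ × B) // H.index = n}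
      = ∑ c ∈ n.divisors, (n / c) * Nat.card {H' : AddSubgroup B // H'.index = n / c} := by
  classical
  have hnc : ∀ c : ℕ, c ∈ n.divisors → n / c ≠ 0 := fun c hc =>
    (Nat.div_pos (Nat.le_of_dvd hn (Nat.dvd_of_mem_divisors hc))
      (Nat.pos_of_mem_divisors hc)).ne'
  set T := Σ c : {c : ℕ // c ∈ n.divisors},
    Σ H' : {H' : AddSubgroup B // H'.index = n / c.1}, B ⧸ H'.1 with hT
  set Ψ : T → {H : AddSubgroup (ℤ × B) // H.index = n} := fun x =>
    ⟨Phi x.1.1 x.2.2.out x.2.1.1, by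
      rw [index_Phi _ (Nat.pos_of_mem_divisors x.1.2), x.2.1.2,
        Nat.mul_div_cancel' (Nat.dvd_of_mem_divisors x.1.2)]⟩ with hΨ
  have hbij : Function.Bijective Ψ := by
    constructor
    · rintro ⟨⟨c₁, hc₁⟩, ⟨H₁, hH₁⟩, β₁⟩ ⟨⟨c₂, hc₂⟩, ⟨H₂, hH₂⟩, β₂⟩ h
      have hval : Phi c₁ β₁.out H₁ = Phi c₂ β₂.out H₂ := congrArg Subtype.val h
      have hceq : c₁ = c₂ := by
        have hmap := congrArg (AddSubgroup.map (AddMonoidHom.fst ℤ B)) hval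
        rw [map_fst_Phi, map_fst_Phi] at hmap
        have := congrArg AddSubgroup.index hmap
        rwa [Int.index_zmultiples, Int.index_zmultiples, Int.natAbs_natCast,
          Int.natAbs_natCast] at this
      subst hceq
      have hpos : 0 < c₁ := Nat.pos_of_mem_divisors hc₁
      have hHeq : H₁ = H₂ := by
        have hcom := congrArg (AddSubgroup.comap (AddMonoidHom.inr ℤ B)) hval
        rwa [comap_inr_Phi _ hpos, comap_inr_Phi _ hpos] at hcom
      subst hHeq
      have hβ : β₁ = β₂ := by
        have hsub := sub_mem_of_Phi_eq hpos hval
        rw [← QuotientAddGroup.out_eq' β₁, ← QuotientAddGroup.out_eq' β₂,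
          QuotientAddGroup.eq]
        simpa [neg_sub, sub_eq_neg_add] using AddSubgroup.neg_mem _ hsub
      subst hβ
      rfl
    · rintro ⟨H, hH⟩
      have hne : H.index ≠ 0 := by rw [hH]; exact hn.ne'
      obtain ⟨c, b, hc, hPhi⟩ := exists_Phi H hne
      set H' := H.comap (AddMonoidHom.inr ℤ B) with hH'
      have hidx : n = c * H'.index := by
        rw [← hH, hPhi, index_Phi _ hc]
      have hcmem : c ∈ n.divisors :=
        Nat.mem_divisors.mpr ⟨⟨H'.index, hidx⟩, hn.ne'⟩
      have hidx' : H'.index = n / c := by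
        rw [hidx, Nat.mul_div_cancel_left _ hc]
      refine ⟨⟨⟨c, hcmem⟩, ⟨H', hidx'⟩, QuotientAddGroup.mk b⟩, ?_⟩
      apply Subtype.ext
      show Phi c (QuotientAddGroup.mk b : B ⧸ H').out H' = H
      rw [hPhi]
      apply Phi_congr
      have := QuotientAddGroup.eq.mp (QuotientAddGroup.out_eq' (QuotientAddGroup.mk b : B ⧸ H'))
      simpa [sub_eq_neg_add, neg_add_rev] using AddSubgroup.neg_mem _ this
  have hcard : Nat.card T = Nat.card {H : AddSubgroup (ℤ × B) // H.index = n} :=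
    Nat.card_congr (Equiv.ofBijective Ψ hbij)
  haveI Ifin : ∀ c : {c : ℕ // c ∈ n.divisors},
      Finite {H' : AddSubgroup B // H'.index = n / c.1} := fun c => hfin _ (hnc c.1 c.2)
  have Iquot : ∀ (c : {c : ℕ // c ∈ n.divisors})
      (H' : {H' : AddSubgroup B // H'.index = n / c.1}), Finite (B ⧸ H'.1) := by
    intro c H'
    haveI : H'.1.FiniteIndex := ⟨by rw [H'.2]; exact hnc c.1 c.2⟩
    infer_instance
  have hTc : ∀ c : {c : ℕ // c ∈ n.divisors},
      Nat.card (Σ H' : {H' : AddSubgroup B // H'.index = n / c.1}, B ⧸ H'.1)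
        = (n / c.1) * Nat.card {H' : AddSubgroup B // H'.index = n / c.1} := by
    intro c
    haveI := Ifin c
    haveI : ∀ H' : {H' : AddSubgroup B // H'.index = n / c.1}, Finite (B ⧸ H'.1) := Iquot c
    letI : Fintype {H' : AddSubgroup B // H'.index = n / c.1} := Fintype.ofFinite _
    rw [natCard_sigma]
    have hval : ∀ H' : {H' : AddSubgroup B // H'.index = n / c.1},
        Nat.card (B ⧸ H'.1) = n / c.1 := fun H' => by
      rw [← AddSubgroup.index_eq_card, H'.2]
    rw [Finset.sum_congr rfl (fun H' _ => hval H'), Finset.sum_const, Finset.card_univ,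
      Nat.card_eq_fintype_card, smul_eq_mul, mul_comm]
  haveI : ∀ c : {c : ℕ // c ∈ n.divisors},
      Finite (Σ H' : {H' : AddSubgroup B // H'.index = n / c.1}, B ⧸ H'.1) := by
    intro c
    haveI := Ifin c
    haveI : ∀ H' : {H' : AddSubgroup B // H'.index = n / c.1}, Finite (B ⧸ H'.1) := Iquot c
    infer_instance
  rw [← hcard, hT, natCard_sigma, Finset.sum_congr rfl (fun c _ => hTc c),
    ← Finset.sum_coe_sort n.divisors
      (fun c => (n / c) * Nat.card {H' : AddSubgroup B // H'.index = n / c})]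

end Phi

section Finiteness

lemma finite_subgroups_of_index (k n : ℕ) (hn : n ≠ 0) :
    Finite {H : AddSubgroup (Fin k → ℤ) // H.index = n} := by
  classical
  haveI : NeZero n := ⟨hn⟩
  let f : (Fin k → ℤ) →+ (Fin k → ZMod n) :=
    { toFun := fun x i => ((x i : ℤ) : ZMod n)
      map_zero' := by funext i; simp
      map_add' := by intro a b; funext i; push_cast; simp }
  have hker : ∀ H : AddSubgroup (Fin k → ℤ), H.index = n → f.ker ≤ H := by
    intro H hH x hx
    have hdvd : ∀ i, (n : ℤ) ∣ x i := by
      intro i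
      have : ((x i : ℤ) : ZMod n) = 0 := congrFun hx i
      exact (ZMod.intCast_zmod_eq_zero_iff_dvd _ _).mp this
    have hx' : x = n • fun i => x i / (n : ℤ) := by
      funext i
      simp only [Pi.smul_apply, nsmul_eq_mul]
      rw [Int.mul_ediv_cancel' (hdvd i)]
    rw [hx', ← hH]
    exact H.nsmul_index_mem _
  haveI : Finite (AddSubgroup (Fin k → ZMod n)) :=
    Finite.of_injective (fun H : AddSubgroup (Fin k → ZMod n) => (H : Set (Fin k → ZMod n))) SetLike.coe_injective
  apply Finite.of_injective (fun H : {H : AddSubgroup (Fin k → ℤ) // H.index = n} =>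
    H.1.map f)
  rintro ⟨H₁, h₁⟩ ⟨H₂, h₂⟩ h
  apply Subtype.ext
  have := congrArg (AddSubgroup.comap f) h
  rw [AddSubgroup.comap_map_eq, AddSubgroup.comap_map_eq,
    sup_eq_left.mpr (hker H₁ h₁), sup_eq_left.mpr (hker H₂ h₂)] at this
  exact this

end Finiteness

section Transfer

lemma card_index_congr {G G' : Type*} [AddGroup G] [AddGroup G'] (e : G ≃+ G') (n : ℕ) :
    Nat.card {H : AddSubgroup G // H.index = n}
      = Nat.card {H : AddSubgroup G' // H.index = n} := by
  refine Nat.card_congr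
    ⟨fun H => ⟨H.1.comap e.symm.toAddMonoidHom, ?_⟩,
     fun H => ⟨H.1.comap e.toAddMonoidHom, ?_⟩, ?_, ?_⟩
  · rw [AddSubgroup.index_comap_of_surjective _ e.symm.surjective]; exact H.2
  · rw [AddSubgroup.index_comap_of_surjective _ e.surjective]; exact H.2
  · rintro ⟨H, hH⟩
    apply Subtype.ext
    show (H.comap e.symm.toAddMonoidHom).comap e.toAddMonoidHom = H
    ext x
    simp [AddSubgroup.mem_comap]
  · rintro ⟨H, hH⟩
    apply Subtype.ext
    show (H.comap e.toAddMonoidHom).comap e.symm.toAddMonoidHom = H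
    ext x
    simp [AddSubgroup.mem_comap]

end Transfer

section Combinatorics

lemma comb_step (k n : ℕ) (hn : 0 < n) :
    ∑ d ∈ (Fintype.piFinset (fun _ : Fin (k+1) => n.divisors)).filter
        (fun d => ∏ i, d i = n), ∏ i, d i ^ (i : ℕ)
      = ∑ c ∈ n.divisors, (n / c) *
          ∑ d ∈ (Fintype.piFinset (fun _ : Fin k => (n / c).divisors)).filter
            (fun d => ∏ i, d i = n / c), ∏ i, d i ^ (i : ℕ) := by
  classical
  have hrw : ∀ c ∈ n.divisors,
      (n / c) * (∑ d ∈ (Fintype.piFinset (fun _ : Fin k => (n / c).divisors)).filter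
          (fun d => ∏ i, d i = n / c), ∏ i, d i ^ (i : ℕ))
        = ∑ d ∈ (Fintype.piFinset (fun _ : Fin k => (n / c).divisors)).filter
          (fun d => ∏ i, d i = n / c), (n / c) * ∏ i, d i ^ (i : ℕ) :=
    fun c _ => Finset.mul_sum _ _ _
  rw [Finset.sum_congr rfl hrw, Finset.sum_sigma']
  refine Finset.sum_bij' (fun d _ => (⟨d 0, Fin.tail d⟩ : Σ c : ℕ, Fin k → ℕ))
    (fun x _ => Fin.cons x.1 x.2) ?_ ?_ ?_ ?_ ?_
  · intro a ha
    rw [Finset.mem_filter, Fintype.mem_piFinset] at ha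
    obtain ⟨hmem, hprod⟩ := ha
    have h0pos : 0 < a 0 := Nat.pos_of_mem_divisors (hmem 0)
    have hprod' : a 0 * ∏ j, Fin.tail a j = n := by
      rw [← hprod, Fin.prod_univ_succ]; rfl
    have hP : ∏ j, Fin.tail a j = n / a 0 := by
      rw [← hprod', Nat.mul_div_cancel_left _ h0pos]
    have hPne : n / a 0 ≠ 0 := by
      rw [← hP]
      intro h0
      rw [h0, mul_zero] at hprod'
      exact hn.ne' hprod'.symm
    rw [Finset.mem_sigma]
    refine ⟨hmem 0, ?_⟩
    rw [Finset.mem_filter, Fintype.mem_piFinset]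
    refine ⟨fun j => Nat.mem_divisors.mpr ⟨?_, hPne⟩, hP⟩
    rw [← hP]
    exact Finset.dvd_prod_of_mem _ (Finset.mem_univ j)
  · rintro ⟨c, d⟩ hx
    rw [Finset.mem_sigma, Finset.mem_filter, Fintype.mem_piFinset] at hx
    obtain ⟨hc, hd, hdp⟩ := hx
    dsimp only at hc hd hdp
    have hcd : c ∣ n := Nat.dvd_of_mem_divisors hc
    simp only [Finset.mem_filter, Fintype.mem_piFinset]
    constructor
    · intro i
      refine Fin.cases ?_ ?_ i
      · rw [Fin.cons_zero]; exact hc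
      · intro j
        rw [Fin.cons_succ]
        refine Nat.mem_divisors.mpr ⟨dvd_trans (Nat.dvd_of_mem_divisors (hd j))
          (Nat.div_dvd_of_dvd hcd), hn.ne'⟩
    · rw [Fin.prod_univ_succ, Fin.cons_zero]
      have h2 : (∏ j : Fin k, (Fin.cons c d : Fin (k+1) → ℕ) j.succ) = ∏ j : Fin k, d j :=
        Finset.prod_congr rfl (fun j _ => by simp)
      rw [h2, hdp, Nat.mul_div_cancel' hcd]
  · intro a _
    exact Fin.cons_self_tail a
  · rintro ⟨c, d⟩ _
    simp
  · intro a ha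
    rw [Finset.mem_filter, Fintype.mem_piFinset] at ha
    obtain ⟨hmem, hprod⟩ := ha
    have h0pos : 0 < a 0 := Nat.pos_of_mem_divisors (hmem 0)
    have hprod' : a 0 * ∏ j, Fin.tail a j = n := by
      rw [← hprod, Fin.prod_univ_succ]; rfl
    have hP : ∏ j, Fin.tail a j = n / a 0 := by
      rw [← hprod', Nat.mul_div_cancel_left _ h0pos]
    show ∏ i, a i ^ (i : ℕ) = (n / a 0) * ∏ j, Fin.tail a j ^ (j : ℕ)
    have hterm : ∀ j : Fin k, a j.succ ^ ((j.succ : ℕ))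
        = Fin.tail a j * Fin.tail a j ^ (j : ℕ) := by
      intro j
      rw [Fin.val_succ, pow_succ']
      rfl
    rw [Fin.prod_univ_succ, Finset.prod_congr rfl (fun j _ => hterm j),
      Finset.prod_mul_distrib, hP]
    simp [mul_assoc]

end Combinatorics

lemma main_count (k n : ℕ) (hn : 0 < n) :
    Nat.card {H : AddSubgroup (Fin k → ℤ) // H.index = n} =
      ∑ d ∈ (Fintype.piFinset (fun _ : Fin k => n.divisors)).filter
          (fun d => ∏ i, d i = n),
        ∏ i, d i ^ (i : ℕ) := by
  induction k generalizing n with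
  | zero =>
    have hH : ∀ H : AddSubgroup (Fin 0 → ℤ), H = ⊤ := by
      intro H
      ext x
      have hx : x = 0 := funext fun i => i.elim0
      simp only [AddSubgroup.mem_top, iff_true, hx]
      exact H.zero_mem
    have hidx : ∀ H : AddSubgroup (Fin 0 → ℤ), H.index = 1 := fun H => by
      rw [hH H, AddSubgroup.index_top]
    by_cases hn1 : n = 1
    · subst hn1
      haveI : Unique {H : AddSubgroup (Fin 0 → ℤ) // H.index = 1} :=
        { default := ⟨⊤, AddSubgroup.index_top⟩
          uniq := fun H => Subtype.ext (hH H.1) }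
      rw [Nat.card_unique]
      have hall : ∀ d ∈ Fintype.piFinset (fun _ : Fin 0 => Nat.divisors 1),
          ∏ i, d i = 1 := fun d _ => Fin.prod_univ_zero _
      rw [Finset.filter_true_of_mem hall,
        Finset.sum_congr rfl (fun d _ => Fin.prod_univ_zero _), Finset.sum_const,
        smul_eq_mul, mul_one, Fintype.card_piFinset]
      simp
    · haveI : IsEmpty {H : AddSubgroup (Fin 0 → ℤ) // H.index = n} :=
        ⟨fun H => hn1 (by rw [← H.2, hidx H.1])⟩
      rw [Nat.card_of_isEmpty, Finset.filter_false_of_mem, Finset.sum_empty]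
      intro d _
      rw [Fin.prod_univ_zero]
      exact fun h => hn1 h.symm
  | succ k ih =>
    have e : (Fin (k+1) → ℤ) ≃+ ℤ × (Fin k → ℤ) :=
      { (Fin.consEquiv (fun _ : Fin (k+1) => ℤ)).symm with map_add' := fun a b => rfl }
    rw [card_index_congr e n, step n hn (fun m hm => finite_subgroups_of_index k m hm),
      comb_step k n hn]
    apply Finset.sum_congr rfl
    intro c hc
    have hpos : 0 < n / c :=
      Nat.div_pos (Nat.le_of_dvd hn (Nat.dvd_of_mem_divisors hc))
        (Nat.pos_of_mem_divisors hc)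
    rw [ih (n / c) hpos]

theorem subgroups_of_index_in_Zk (k : ℕ) (hk : 1 ≤ k) (n : ℕ) (hn : 0 < n) :
    Nat.card {H : AddSubgroup (Fin k → ℤ) // H.index = n} =
      ∑ d ∈ (Fintype.piFinset (fun _ : Fin k => n.divisors)).filter
          (fun d => ∏ i, d i = n),
        ∏ i, d i ^ (i : ℕ) := by
  exact main_count k n hn
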